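/- Let R be a Dedekind domain with field of fractions K. Let J = (A_{R,K})ˣ be the group of units of the finite adèle ring (the finite idele group), let Kˣ → J be the group homomorphism induced by the canonical embedding K → A_{R,K}, and let (∏_v O_v)ˣ → J be the group homomorphism induced by the canonical embedding ∏_v O_v → A_{R,K} of the finite integral adèles. Then the quotient of J by the subgroup generated by the images of Kˣ and (∏_v O_v)ˣ is isomorphic, as a group, to the ideal class group of R. (This is Weil's adelic description of line bundles, i.e. of the case G = GL₁, for the affine curve Spec R.) -/

import Mathlib

open IsDedekindDomain

noncomputable section

namespace DedekindDomain

variable (R K : Type*) [CommRing R] [IsDedekindDomain R] [Field K] [Algebra R K]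
  [IsFractionRing R K]

/-- The finite integral adèles `∏_v O_v` (removed from Mathlib; old definition restored). -/
def FiniteIntegralAdeles : Type _ :=
  ∀ v : HeightOneSpectrum R, v.adicCompletionIntegers K

instance : CommRing (FiniteIntegralAdeles R K) :=
  inferInstanceAs (CommRing (∀ v : HeightOneSpectrum R, v.adicCompletionIntegers K))

/-- The canonical (componentwise) inclusion `∏_v O_v → A_{R,K}`. -/
def finiteIntegralAdelesToFiniteAdeleRing :
    FiniteIntegralAdeles R K →+* FiniteAdeleRing R K where
  toFun r := ⟨fun v => (r v : v.adicCompletion K), Filter.Eventually.of_forall fun v => (r v).2⟩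
  map_one' := rfl
  map_mul' _ _ := rfl
  map_zero' := rfl
  map_add' _ _ := rfl

instance : Algebra (FiniteIntegralAdeles R K) (FiniteAdeleRing R K) :=
  (finiteIntegralAdelesToFiniteAdeleRing R K).toAlgebra

end DedekindDomain

end

open DedekindDomain IsDedekindDomain IsDedekindDomain.HeightOneSpectrum FractionalIdeal
open scoped Multiplicative nonZeroDivisors

noncomputable section

namespace Stmt11Aux

variable {R K : Type*} [CommRing R] [IsDedekindDomain R] [Field K] [Algebra R K]
  [IsFractionRing R K]

lemma coe_mul_apply (a b : FiniteAdeleRing R K) (v : HeightOneSpectrum R) :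
    (a * b) v = a v * b v := rfl

lemma unit_mul_inv_apply (u : (FiniteAdeleRing R K)ˣ) (v : HeightOneSpectrum R) :
    (u : FiniteAdeleRing R K) v * ((u⁻¹ : (FiniteAdeleRing R K)ˣ) : FiniteAdeleRing R K) v = 1 := by
  rw [← coe_mul_apply, u.mul_inv]
  rfl

lemma val_ne_zero (u : (FiniteAdeleRing R K)ˣ) (v : HeightOneSpectrum R) :
    Valued.v ((u : FiniteAdeleRing R K) v) ≠ 0 := by
  have h := left_ne_zero_of_mul_eq_one (unit_mul_inv_apply u v)
  simpa using h

/-- minus the additive valuation of the `v`-component of the idele `u`. -/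
def exps (u : (FiniteAdeleRing R K)ˣ) (v : HeightOneSpectrum R) : ℤ :=
  -Multiplicative.toAdd (WithZero.unzero (val_ne_zero u v))

lemma val_eq_exps (u : (FiniteAdeleRing R K)ˣ) (v : HeightOneSpectrum R) :
    Valued.v ((u : FiniteAdeleRing R K) v)
      = ((Multiplicative.ofAdd (-exps u v) : Multiplicative ℤ) : WithZero (Multiplicative ℤ)) := by
  rw [exps, neg_neg, ofAdd_toAdd, WithZero.coe_unzero]

lemma exps_eq_of {u : (FiniteAdeleRing R K)ˣ} {v : HeightOneSpectrum R} {e : ℤ}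
    (h : Valued.v ((u : FiniteAdeleRing R K) v)
      = ((Multiplicative.ofAdd (-e) : Multiplicative ℤ) : WithZero (Multiplicative ℤ))) :
    exps u v = e := by
  have h2 : WithZero.unzero (val_ne_zero u v) = Multiplicative.ofAdd (-e) := by
    rw [← WithZero.coe_inj, WithZero.coe_unzero, h]
  rw [exps, h2, toAdd_ofAdd, neg_neg]

lemma exps_eq_zero_iff {u : (FiniteAdeleRing R K)ˣ} {v : HeightOneSpectrum R} :
    exps u v = 0 ↔ Valued.v ((u : FiniteAdeleRing R K) v) = 1 := by
  constructor
  · intro h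
    rw [val_eq_exps u v, h]
    rfl
  · intro h
    apply exps_eq_of
    rw [h]
    rfl

lemma exps_mul (u w : (FiniteAdeleRing R K)ˣ) (v : HeightOneSpectrum R) :
    exps (u * w) v = exps u v + exps w v := by
  apply exps_eq_of
  rw [Units.val_mul, coe_mul_apply, _root_.map_mul, val_eq_exps u v, val_eq_exps w v,
    ← WithZero.coe_mul, ← ofAdd_add, neg_add]

lemma exps_finite (u : (FiniteAdeleRing R K)ˣ) : {v | exps u v ≠ 0}.Finite := by
  apply Set.Finite.subset (Set.Finite.union (u : FiniteAdeleRing R K).2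
    ((u⁻¹ : (FiniteAdeleRing R K)ˣ) : FiniteAdeleRing R K).2)
  intro v hv
  rw [Set.mem_setOf_eq, Ne, exps_eq_zero_iff] at hv
  rcases lt_or_gt_of_ne hv with h | h
  · right
    simp only [Set.mem_compl_iff, Set.mem_setOf_eq, SetLike.mem_coe, mem_adicCompletionIntegers, not_le]
    by_contra h'
    rw [not_lt] at h'
    have h1 := unit_mul_inv_apply u v
    have : (1 : WithZero (Multiplicative ℤ)) < 1 := by
      calc (1:WithZero (Multiplicative ℤ)) = Valued.v ((u : FiniteAdeleRing R K) v)
            * Valued.v (((u⁻¹ : (FiniteAdeleRing R K)ˣ) : FiniteAdeleRing R K) v) := by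
              rw [← _root_.map_mul, h1, _root_.map_one]
        _ ≤ Valued.v ((u : FiniteAdeleRing R K) v) * 1 := mul_le_mul_right h' _
        _ < 1 := by rwa [mul_one]
    exact absurd this (lt_irrefl _)
  · left
    simp only [Set.mem_compl_iff, Set.mem_setOf_eq, SetLike.mem_coe, mem_adicCompletionIntegers, not_le]
    exact h


lemma exps_cofinite (u : (FiniteAdeleRing R K)ˣ) :
    ∀ᶠ v : HeightOneSpectrum R in Filter.cofinite, exps u v = 0 := by
  rw [Filter.eventually_cofinite]
  exact exps_finite u

/-- The fractional ideal attached to an idele. -/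
def idl (u : (FiniteAdeleRing R K)ˣ) : FractionalIdeal R⁰ K :=
  ∏ᶠ v : HeightOneSpectrum R, (v.asIdeal : FractionalIdeal R⁰ K) ^ exps u v

lemma mulSupport_subset (u : (FiniteAdeleRing R K)ˣ) :
    (Function.mulSupport fun v : HeightOneSpectrum R =>
      (v.asIdeal : FractionalIdeal R⁰ K) ^ exps u v) ⊆ {v | exps u v ≠ 0} := by
  intro v hv
  rw [Function.mem_mulSupport] at hv
  intro h
  rw [h, zpow_zero] at hv
  exact hv rfl

lemma idl_ne_zero (u : (FiniteAdeleRing R K)ˣ) : idl u ≠ 0 := by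
  rw [idl, finprod_eq_prod_of_mulSupport_subset _
    (s := (exps_finite u).toFinset) (by simpa using mulSupport_subset u)]
  rw [Finset.prod_ne_zero_iff]
  intro v _
  exact zpow_ne_zero _ (coeIdeal_ne_zero.mpr v.ne_bot)

lemma count_idl (v : HeightOneSpectrum R) (u : (FiniteAdeleRing R K)ˣ) :
    count K v (idl u) = exps u v :=
  count_finprod K v (exps u) (exps_cofinite u)

lemma idl_one : idl (1 : (FiniteAdeleRing R K)ˣ) = 1 := by
  have h : ∀ v : HeightOneSpectrum R, exps (1 : (FiniteAdeleRing R K)ˣ) v = 0 := by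
    intro v
    rw [exps_eq_zero_iff]
    exact _root_.map_one _
  rw [idl]
  simp only [h, zpow_zero]
  exact finprod_one

lemma idl_mul (u w : (FiniteAdeleRing R K)ˣ) : idl (u * w) = idl u * idl w := by
  rw [idl, idl, idl, ← finprod_mul_distrib
    (Set.Finite.subset (exps_finite u) (mulSupport_subset u))
    (Set.Finite.subset (exps_finite w) (mulSupport_subset w))]
  apply finprod_congr
  intro v
  rw [exps_mul, zpow_add₀ (coeIdeal_ne_zero.mpr v.ne_bot)]

/-- The homomorphism from ideles to invertible fractional ideals. -/
def phi : (FiniteAdeleRing R K)ˣ →* (FractionalIdeal R⁰ K)ˣ where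
  toFun u := Units.mk0 (idl u) (idl_ne_zero u)
  map_one' := by ext; simp [idl_one]
  map_mul' u w := by ext; simp [idl_mul]

lemma phi_surjective : Function.Surjective (phi (R := R) (K := K)) := by
  intro I
  set e : HeightOneSpectrum R → ℤ := fun v => count K v (I : FractionalIdeal R⁰ K) with he
  have hef : ∀ᶠ v : HeightOneSpectrum R in Filter.cofinite, e v = 0 :=
    finite_factors (I : FractionalIdeal R⁰ K)
  -- a uniformizer at each place
  have hπ : ∀ v : HeightOneSpectrum R, ∃ π : R,
      v.intValuation π = Multiplicative.ofAdd (-1 : ℤ) :=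
    fun v => v.intValuation_exists_uniformizer
  choose π hπ using hπ
  -- the base elements in the completions
  set b : ∀ v : HeightOneSpectrum R, v.adicCompletion K :=
    fun v => ((algebraMap R K (π v) : K) : v.adicCompletion K) with hb
  have hbval : ∀ v : HeightOneSpectrum R,
      Valued.v (b v) = ((Multiplicative.ofAdd (-1 : ℤ) : Multiplicative ℤ) : WithZero (Multiplicative ℤ)) := by
    intro v
    rw [hb, valuedAdicCompletion_eq_valuation' v (algebraMap R K (π v)),
      valuation_of_algebraMap, hπ v]
  have hbne : ∀ v : HeightOneSpectrum R, b v ≠ 0 := by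
    intro v h
    have h2 := hbval v
    rw [h, _root_.map_zero] at h2
    exact WithZero.zero_ne_coe h2
  set x : ∀ v : HeightOneSpectrum R, v.adicCompletion K := fun v => b v ^ e v with hx
  have hxne : ∀ v : HeightOneSpectrum R, x v ≠ 0 := fun v => zpow_ne_zero _ (hbne v)
  have hxval : ∀ v : HeightOneSpectrum R,
      Valued.v (x v) = ((Multiplicative.ofAdd (-e v) : Multiplicative ℤ) : WithZero (Multiplicative ℤ)) := by
    intro v
    rw [hx]
    simp only
    rw [map_zpow₀, hbval v, ← WithZero.coe_zpow, ← ofAdd_zsmul]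
    norm_num
  have hone : ∀ v : HeightOneSpectrum R, e v = 0 → x v = 1 := by
    intro v h
    rw [hx]
    simp only [h, zpow_zero]
  have hfin : ∀ (y : ∀ v : HeightOneSpectrum R, v.adicCompletion K), (∀ v, e v = 0 → y v = 1) →
      ∀ᶠ v in Filter.cofinite, y v ∈ (v.adicCompletionIntegers K : Set (v.adicCompletion K)) := by
    intro y hy
    rw [Filter.eventually_cofinite]
    apply Set.Finite.subset hef
    intro v hv
    simp only [Set.mem_compl_iff, Set.mem_setOf_eq] at hv ⊢
    intro h
    rw [hy v h] at hv
    exact hv (one_mem _)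
  set y : ∀ v : HeightOneSpectrum R, v.adicCompletion K := fun v => (x v)⁻¹ with hy
  refine ⟨⟨⟨x, hfin x hone⟩, ⟨y, hfin y ?_⟩, ?_, ?_⟩, ?_⟩
  · intro v h
    rw [hy]
    simp only [hone v h, inv_one]
  · apply Subtype.ext
    funext v
    exact mul_inv_cancel₀ (hxne v)
  · apply Subtype.ext
    funext v
    exact inv_mul_cancel₀ (hxne v)
  · set u : (FiniteAdeleRing R K)ˣ :=
      ⟨⟨x, hfin x hone⟩, ⟨y, hfin y fun v h => by rw [hy]; simp only [hone v h, inv_one]⟩,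
        Subtype.ext (funext fun v => mul_inv_cancel₀ (hxne v)),
        Subtype.ext (funext fun v => inv_mul_cancel₀ (hxne v))⟩
    apply Units.ext
    show idl u = (I : FractionalIdeal R⁰ K)
    have hexps : ∀ v : HeightOneSpectrum R, exps u v = e v := by
      intro v
      exact exps_eq_of (hxval v)
    rw [idl]
    simp only [hexps]
    exact finprod_heightOneSpectrum_factorization' K I.ne_zero


/-- The embedding of `Kˣ` into the ideles. -/
def embK : Kˣ →* (FiniteAdeleRing R K)ˣ :=
  Units.map (algebraMap K (FiniteAdeleRing R K)).toMonoidHom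

/-- The embedding of the units of the integral adeles into the ideles. -/
def embO : (FiniteIntegralAdeles R K)ˣ →* (FiniteAdeleRing R K)ˣ :=
  Units.map (algebraMap (FiniteIntegralAdeles R K) (FiniteAdeleRing R K)).toMonoidHom

lemma val_embK (x : Kˣ) (w : HeightOneSpectrum R) :
    Valued.v (((embK (R := R) x : (FiniteAdeleRing R K)ˣ)).val.val w) = w.valuation K (x : K) := by
  rw [← valuedAdicCompletion_eq_valuation' w (x : K)]
  rfl

lemma idl_embK (x : Kˣ) : idl (embK x) = spanSingleton R⁰ (x : K) := by
  obtain ⟨⟨n, d⟩, hnd⟩ := IsLocalization.mk'_surjective R⁰ (x : K)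
  replace hnd : IsLocalization.mk' K n d = (x : K) := hnd
  have hn : n ≠ 0 := by
    intro h
    rw [h, IsLocalization.mk'_zero] at hnd
    exact x.ne_zero hnd.symm
  have hd : (d : R) ≠ 0 := nonZeroDivisors.coe_ne_zero d
  rw [← hnd, ← finprod_heightOneSpectrum_factorization_principal_fraction hn d, idl]
  apply finprod_congr
  intro v
  congr 1
  apply exps_eq_of
  rw [show Valued.v (((embK x : (FiniteAdeleRing R K)ˣ) : FiniteAdeleRing R K) v) = v.valuation K (x : K) from val_embK x v, ← hnd, valuation_of_mk', intValuation_apply, intValuation_apply,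
    intValuationDef_if_neg _ hn, intValuationDef_if_neg _ hd, ← WithZero.exp_sub, WithZero.exp_eq_coe_ofAdd]
  congr 1
  ring_nf


lemma exps_one (v : HeightOneSpectrum R) : exps (1 : (FiniteAdeleRing R K)ˣ) v = 0 := by
  rw [exps_eq_zero_iff]
  exact _root_.map_one _

lemma exps_inv (u : (FiniteAdeleRing R K)ˣ) (v : HeightOneSpectrum R) :
    exps u⁻¹ v = -exps u v := by
  have h := exps_mul u u⁻¹ v
  rw [mul_inv_cancel, exps_one] at h
  omega

lemma val_embO_le (r : (FiniteIntegralAdeles R K)ˣ) (v : HeightOneSpectrum R) :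
    Valued.v (((embO (R := R) (K := K) r : (FiniteAdeleRing R K)ˣ)).val.val v) ≤ 1 := by
  have h : ((embO (R := R) (K := K) r : (FiniteAdeleRing R K)ˣ)).val.val v
      = ((r.val v : v.adicCompletionIntegers K) : v.adicCompletion K) := rfl
  rw [h]
  exact (r.val v).2

lemma exps_embO (r : (FiniteIntegralAdeles R K)ˣ) (v : HeightOneSpectrum R) :
    exps (embO r) v = 0 := by
  rw [exps_eq_zero_iff]
  have h1 := val_embO_le r v
  have h2 := val_embO_le r⁻¹ v
  rw [_root_.map_inv] at h2
  have h3 := unit_mul_inv_apply (embO (R := R) (K := K) r) v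
  apply le_antisymm h1
  calc (1 : WithZero (Multiplicative ℤ)) = Valued.v (((embO (R := R) (K := K) r : (FiniteAdeleRing R K)ˣ)).val.val v)
        * Valued.v ((((embO (R := R) (K := K) r)⁻¹ : (FiniteAdeleRing R K)ˣ)).val.val v) := by
          rw [← _root_.map_mul]
          rw [show (((embO (R := R) (K := K) r : (FiniteAdeleRing R K)ˣ)).val.val v)
            * ((((embO (R := R) (K := K) r)⁻¹ : (FiniteAdeleRing R K)ˣ)).val.val v) = 1 from h3]
          exact (Valuation.map_one _).symm
    _ ≤ Valued.v (((embO (R := R) (K := K) r : (FiniteAdeleRing R K)ˣ)).val.val v) * 1 :=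
          mul_le_mul_right h2 _
    _ = Valued.v (((embO (R := R) (K := K) r : (FiniteAdeleRing R K)ˣ)).val.val v) := mul_one _

lemma idl_inv (u : (FiniteAdeleRing R K)ˣ) : idl u⁻¹ = (idl u)⁻¹ := by
  rw [idl, idl, ← finprod_inv_distrib]
  apply finprod_congr
  intro v
  rw [exps_inv, zpow_neg]

lemma idl_eq_one_of_exps {u : (FiniteAdeleRing R K)ˣ} (h : ∀ v, exps u v = 0) :
    idl u = 1 := by
  rw [idl]
  simp only [h, zpow_zero]
  exact finprod_one

/-- The idele class map to the quotient of fractional ideals by principal ones. -/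
def psi : (FiniteAdeleRing R K)ˣ →* ((FractionalIdeal R⁰ K)ˣ ⧸ (toPrincipalIdeal R K).range) :=
  (QuotientGroup.mk' (toPrincipalIdeal R K).range).comp phi

lemma psi_surjective : Function.Surjective (psi (R := R) (K := K)) :=
  (QuotientGroup.mk'_surjective _).comp phi_surjective

lemma ker_psi : (psi (R := R) (K := K)).ker = (embK (R := R) (K := K)).range ⊔ embO.range := by
  apply le_antisymm
  · -- hard direction: the kernel consists of products of principal ideles and integral units
    intro u hu
    rw [MonoidHom.mem_ker, psi, MonoidHom.comp_apply, QuotientGroup.mk'_apply,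
      QuotientGroup.eq_one_iff] at hu
    rw [mem_principal_ideals_iff] at hu
    obtain ⟨x, hx⟩ := hu
    have hx0 : x ≠ 0 := by
      intro h
      rw [h, spanSingleton_zero] at hx
      exact idl_ne_zero u hx.symm
    set a : (FiniteAdeleRing R K)ˣ := embK (Units.mk0 x hx0) with ha
    set t : (FiniteAdeleRing R K)ˣ := a⁻¹ * u with hta
    have h4 : idl (embK (R := R) (Units.mk0 x hx0)) = idl u := by
      rw [idl_embK]
      exact hx.trans rfl
    have hidlt : idl t = 1 := by
      rw [hta, idl_mul, ha, idl_inv, h4, inv_mul_cancel₀ (idl_ne_zero u)]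
    have ht : ∀ v, exps t v = 0 := by
      intro v
      rw [← count_idl v t, hidlt]
      exact count_one K v
    have hval : ∀ v, Valued.v (t.val.val v) = 1 := fun v => exps_eq_zero_iff.mp (ht v)
    have hvalinv : ∀ v, Valued.v ((t⁻¹ : (FiniteAdeleRing R K)ˣ).val.val v) = 1 := by
      intro v
      apply exps_eq_zero_iff.mp
      rw [exps_inv, ht v, neg_zero]
    set rv : FiniteIntegralAdeles R K := fun v =>
      (⟨t.val.val v, by rw [mem_adicCompletionIntegers]; exact le_of_eq (hval v)⟩ :
        v.adicCompletionIntegers K) with hrv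
    set rw' : FiniteIntegralAdeles R K := fun v =>
      (⟨(t⁻¹ : (FiniteAdeleRing R K)ˣ).val.val v,
        by rw [mem_adicCompletionIntegers]; exact le_of_eq (hvalinv v)⟩ :
        v.adicCompletionIntegers K) with hrw
    have hmul : rv * rw' = 1 := by
      funext v
      apply Subtype.ext
      exact unit_mul_inv_apply t v
    have hmul' : rw' * rv = 1 := by rw [mul_comm]; exact hmul
    set r : (FiniteIntegralAdeles R K)ˣ := ⟨rv, rw', hmul, hmul'⟩ with hr
    have hrt : embO (R := R) (K := K) r = t := by
      apply Units.ext
      apply Subtype.ext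
      funext v
      rfl
    have hu2 : u = a * t := by rw [hta, mul_inv_cancel_left]
    rw [hu2]
    exact Subgroup.mul_mem_sup ⟨Units.mk0 x hx0, rfl⟩ ⟨r, hrt⟩
  · apply sup_le
    · rintro _ ⟨x, rfl⟩
      rw [MonoidHom.mem_ker, psi, MonoidHom.comp_apply, QuotientGroup.mk'_apply,
        QuotientGroup.eq_one_iff, mem_principal_ideals_iff]
      exact ⟨x, (idl_embK x).symm⟩
    · rintro _ ⟨rr, rfl⟩
      rw [MonoidHom.mem_ker, psi, MonoidHom.comp_apply]
      have h : phi (embO (R := R) (K := K) rr) = 1 := by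
        apply Units.ext
        exact idl_eq_one_of_exps (exps_embO rr)
      rw [h, _root_.map_one]

end Stmt11Aux

open Stmt11Aux in
/-- Weil's adelic description of line bundles on `Spec R`.
For a Dedekind domain `R` with field of fractions `K`, the quotient of the group of finite
idèles `(A_{R,K})ˣ` by the subgroup generated by the images of `Kˣ` and of `(∏_v O_v)ˣ` is
isomorphic to the ideal class group of `R`. -/
theorem stmt11 (R K : Type*) [CommRing R] [IsDedekindDomain R] [Field K] [Algebra R K]
    [IsFractionRing R K] :
    Nonempty
      ((FiniteAdeleRing R K)ˣ ⧸
          ((Units.map (algebraMap K (FiniteAdeleRing R K)).toMonoidHom).range ⊔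
            (Units.map
              (algebraMap (FiniteIntegralAdeles R K) (FiniteAdeleRing R K)).toMonoidHom).range)
        ≃* ClassGroup R) := by
  have hker := ker_psi (R := R) (K := K)
  exact ⟨(QuotientGroup.quotientMulEquivOfEq hker.symm).trans
    ((QuotientGroup.quotientKerEquivOfSurjective _ psi_surjective).trans
      (ClassGroup.equiv (R := R) (K := K)).symm)⟩
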